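/- Let D be a digraph with vertices s, t and let A be its arc set. If there is a directed path P from s to t in D such that every arc of D is either an arc of P or belongs to a strongly connected subdigraph of D containing a vertex of P, then there is a directed walk from s to t in D that traverses every arc of D (possibly with repetitions). -/

import Mathlib

/-- `w` is a directed walk from `s` to `t` in the digraph with arc relation `A`. -/
def DWalkFromTo {V : Type*} (A : V → V → Prop) (w : List V) (s t : V) : Prop :=
  w.Chain' A ∧ w.head? = some s ∧ w.getLast? = some t

/-- The list of arcs (steps) traversed by a walk `w`. -/
def steps {V : Type*} (w : List V) : List (V × V) := w.zip w.tail

/-- The subdigraph induced on `S` is strongly connected: any two vertices of `S`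
are joined by a directed walk staying inside `S`. -/
def StrongConnOn {V : Type*} (A : V → V → Prop) (S : Set V) : Prop :=
  ∀ u ∈ S, ∀ v ∈ S, ∃ w : List V, DWalkFromTo A w u v ∧ ∀ x ∈ w, x ∈ S

section Aux

variable {V : Type*} {A : V → V → Prop}

lemma steps_cons_cons (a b : V) (l : List V) :
    steps (a :: b :: l) = (a, b) :: steps (b :: l) := rfl

lemma steps_append : ∀ (l1 l2 : List V) (a b : V), l1.getLast? = some a →
    l2.head? = some b → steps (l1 ++ l2) = steps l1 ++ (a, b) :: steps l2
  | [], _, _, _, h, _ => by simp at h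
  | [a'], l2, a, b, ha, hb => by
      cases l2 with
      | nil => simp at hb
      | cons b' l2' =>
        simp at ha hb
        subst ha; subst hb
        simp [steps_cons_cons, steps]
  | a1 :: a2 :: l1', l2, a, b, ha, hb => by
      have ha' : (a2 :: l1').getLast? = some a := by
        rw [List.getLast?_cons_cons] at ha; exact ha
      have := steps_append (a2 :: l1') l2 a b ha' hb
      simp only [List.cons_append, steps_cons_cons] at this ⊢
      rw [this]

lemma dwalk_append {w1 w2 : List V} {a b c d : V} (h1 : DWalkFromTo A w1 a b)
    (h2 : DWalkFromTo A w2 c d) (hbc : A b c) :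
    DWalkFromTo A (w1 ++ w2) a d ∧
      steps (w1 ++ w2) = steps w1 ++ (b, c) :: steps w2 := by
  obtain ⟨hc1, hh1, hl1⟩ := h1
  obtain ⟨hc2, hh2, hl2⟩ := h2
  have hne1 : w1 ≠ [] := by intro h; rw [h] at hh1; simp at hh1
  have hne2 : w2 ≠ [] := by intro h; rw [h] at hh2; simp at hh2
  refine ⟨⟨?_, ?_, ?_⟩, steps_append w1 w2 b c hl1 hh2⟩
  · rw [show List.Chain' A (w1 ++ w2) ↔ _ from List.isChain_append]
    refine ⟨hc1, hc2, fun x hx y hy => ?_⟩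
    rw [hl1] at hx; rw [hh2] at hy
    simp at hx hy; subst hx; subst hy; exact hbc
  · rw [List.head?_append_of_ne_nil _ hne1]; exact hh1
  · rw [List.getLast?_append_of_ne_nil _ hne2]; exact hl2

lemma mem_of_head? {l : List V} {x : V} (h : l.head? = some x) : x ∈ l := by
  cases l with
  | nil => simp at h
  | cons a l => simp at h; subst h; exact List.mem_cons_self

/-- Splice a closed walk `c` at a vertex `x` of `w` into `w`. -/
lemma splice : ∀ (w : List V) (s t x : V) (c : List V), DWalkFromTo A w s t →
    x ∈ w → DWalkFromTo A c x x →
    ∃ w', DWalkFromTo A w' s t ∧ (∀ y ∈ w, y ∈ w') ∧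
      (∀ e ∈ steps w, e ∈ steps w') ∧ (∀ e ∈ steps c, e ∈ steps w')
  | [], s, t, x, c, hw, hx, hc => by simp at hx
  | a :: rest, s, t, x, c, hw, hx, hc => by
    obtain ⟨hch, hh, hl⟩ := hw
    have hs : a = s := by simpa using hh
    subst hs
    cases rest with
    | nil =>
      have ht : a = t := by simpa using hl
      have hxa : x = a := by simpa using hx
      subst ht; subst hxa
      refine ⟨c, hc, ?_, ?_, fun e he => he⟩
      · intro y hy
        have : y = x := by simpa using hy
        subst this; exact mem_of_head? hc.2.1
      · intro e he; simp [steps] at he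
    | cons b rest' =>
      have hab : A a b ∧ (b :: rest').Chain' A := List.isChain_cons_cons.mp hch
      have hl' : (b :: rest').getLast? = some t := by
        rw [List.getLast?_cons_cons] at hl; exact hl
      have hrest : DWalkFromTo A (b :: rest') b t := ⟨hab.2, rfl, hl'⟩
      by_cases hxa : x = a
      · subst hxa
        obtain ⟨hw', hst⟩ := dwalk_append hc hrest hab.1
        refine ⟨c ++ b :: rest', hw', ?_, ?_, ?_⟩
        · intro y hy
          rcases List.mem_cons.mp hy with h | h
          · subst h; exact List.mem_append_left _ (mem_of_head? hc.2.1)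
          · exact List.mem_append_right _ h
        · intro e he
          rw [steps_cons_cons] at he
          rw [hst]
          rcases List.mem_cons.mp he with h | h
          · subst h; exact List.mem_append_right _ (List.mem_cons_self)
          · exact List.mem_append_right _ (List.mem_cons_of_mem _ h)
        · intro e he; rw [hst]; exact List.mem_append_left _ he
      · have hx' : x ∈ b :: rest' := by
          rcases List.mem_cons.mp hx with h | h
          · exact absurd h hxa
          · exact h
        obtain ⟨w'', hw'', hv, hs1, hs2⟩ := splice (b :: rest') b t x c hrest hx' hc
        obtain ⟨hch'', hh'', hl''⟩ := hw''
        cases w'' with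
        | nil => simp at hh''
        | cons b0 wt =>
          have hb0 : b0 = b := by simpa using hh''
          subst hb0
          refine ⟨a :: b0 :: wt, ⟨List.isChain_cons_cons.mpr ⟨hab.1, hch''⟩, rfl, ?_⟩, ?_, ?_, ?_⟩
          · rw [List.getLast?_cons_cons]; exact hl''
          · intro y hy
            rcases List.mem_cons.mp hy with h | h
            · subst h; exact List.mem_cons_self
            · exact List.mem_cons_of_mem _ (hv y h)
          · intro e he
            rw [steps_cons_cons] at he ⊢
            rcases List.mem_cons.mp he with h | h
            · subst h; exact List.mem_cons_self
            · exact List.mem_cons_of_mem _ (hs1 e h)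
          · intro e he
            rw [steps_cons_cons]
            exact List.mem_cons_of_mem _ (hs2 e he)

end Aux

theorem walkable_of_path_with_scc {V : Type*} [Fintype V] (A : V → V → Prop)
    (s t : V) (p : List V) (hp : DWalkFromTo A p s t) (hnd : p.Nodup)
    (hcov : ∀ u v, A u v → (u, v) ∈ steps p ∨
      ∃ S : Set V, u ∈ S ∧ v ∈ S ∧ StrongConnOn A S ∧ ∃ x ∈ S, x ∈ p) :
    ∃ w : List V, DWalkFromTo A w s t ∧ ∀ u v, A u v → (u, v) ∈ steps w := by
  classical
  -- key step: process one arc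
  have step : ∀ (u v : V), A u v → ∀ (w : List V), DWalkFromTo A w s t →
      (∀ y ∈ p, y ∈ w) → (∀ e ∈ steps p, e ∈ steps w) →
      ∃ w', DWalkFromTo A w' s t ∧ (∀ y ∈ p, y ∈ w') ∧
        (∀ e ∈ steps w, e ∈ steps w') ∧ (u, v) ∈ steps w' := by
    intro u v huv w hw hvert hsteps
    rcases hcov u v huv with hmem | ⟨S, hu, hv, hSC, x, hxS, hxp⟩
    · exact ⟨w, hw, hvert, fun e he => he, hsteps _ hmem⟩
    · obtain ⟨w1, hw1, _⟩ := hSC x hxS u hu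
      obtain ⟨w2, hw2, _⟩ := hSC v hv x hxS
      obtain ⟨hc, hcsteps⟩ := dwalk_append hw1 hw2 huv
      obtain ⟨w', hw', hv', hs1, hs2⟩ := splice w s t x (w1 ++ w2) hw (hvert x hxp) hc
      refine ⟨w', hw', fun y hy => hv' y (hvert y hy), hs1, ?_⟩
      apply hs2
      rw [hcsteps]
      exact List.mem_append_right _ (List.mem_cons_self)
  -- iterate over a list of candidate arcs
  have main : ∀ (L : List (V × V)) (w : List V), DWalkFromTo A w s t →
      (∀ y ∈ p, y ∈ w) → (∀ e ∈ steps p, e ∈ steps w) →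
      ∃ w', DWalkFromTo A w' s t ∧ (∀ e ∈ steps w, e ∈ steps w') ∧
        ∀ e ∈ L, A e.1 e.2 → e ∈ steps w' := by
    intro L
    induction L with
    | nil => exact fun w hw _ _ => ⟨w, hw, fun e he => he, by simp⟩
    | cons e L ih =>
      intro w hw hvert hsteps
      by_cases hA : A e.1 e.2
      · obtain ⟨w1, hw1, hvert1, hs1, hmem⟩ := step e.1 e.2 hA w hw hvert hsteps
        obtain ⟨w', hw', hs', hcov'⟩ := ih w1 hw1 hvert1
          (fun e' he' => hs1 e' (hsteps e' he'))
        refine ⟨w', hw', fun e' he' => hs' e' (hs1 e' he'), ?_⟩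
        intro e' he' hA'
        rcases List.mem_cons.mp he' with h | h
        · subst h; exact hs' _ hmem
        · exact hcov' e' h hA'
      · obtain ⟨w', hw', hs', hcov'⟩ := ih w hw hvert hsteps
        refine ⟨w', hw', hs', ?_⟩
        intro e' he' hA'
        rcases List.mem_cons.mp he' with h | h
        · subst h; exact absurd hA' hA
        · exact hcov' e' h hA'
  obtain ⟨w', hw', _, hcov'⟩ := main (Finset.univ : Finset (V × V)).toList p hp
    (fun y hy => hy) (fun e he => he)
  exact ⟨w', hw', fun u v huv => hcov' (u, v) (by simp) huv⟩
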